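/- Let U and W be finite-dimensional complex vector spaces, α ∈ U and β ∈ W nonzero, and a, b ≥ 0. If ω₁ ∈ Λ^a U ⊗ Λ^{b+1} W and ω₂ ∈ Λ^{a+1} U ⊗ Λ^b W satisfy L_β ω₁ = 0, L_α ω₂ = 0 and L_α ω₁ = L_β ω₂, then there exists η ∈ Λ^a U ⊗ Λ^b W with ω₁ = L_β η and ω₂ = L_α η. (Exactness of the symbol complex of the Schweitzer complex in the degree just above the corner.) -/

import Mathlib

open scoped TensorProduct

variable {U W : Type} [AddCommGroup U] [Module ℂ U] [AddCommGroup W] [Module ℂ W]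

/-- Left wedge multiplication `L_α = α ∧ -` on exterior powers. -/
noncomputable def Lmul (α : U) (a : ℕ) : ⋀[ℂ]^a U →ₗ[ℂ] ⋀[ℂ]^(a + 1) U :=
  (LinearMap.mulLeft ℂ (ExteriorAlgebra.ι ℂ α)).restrict fun x hx => by
    have h1 : ExteriorAlgebra.ι ℂ α ∈ ⋀[ℂ]^1 U := by
      show ExteriorAlgebra.ι ℂ α ∈ LinearMap.range (ExteriorAlgebra.ι ℂ (M := U)) ^ 1
      rw [pow_one]; exact LinearMap.mem_range_self _ α
    exact (Nat.add_comm 1 a) ▸ SetLike.mul_mem_graded h1 hx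

lemma Lmul_Lmul (α : U) (a : ℕ) (x : ⋀[ℂ]^a U) :
    Lmul α (a + 1) (Lmul α a x) = 0 := by
  apply Subtype.ext
  show ExteriorAlgebra.ι ℂ α * (ExteriorAlgebra.ι ℂ α * (x : ExteriorAlgebra ℂ U)) = 0
  rw [← mul_assoc, ExteriorAlgebra.ι_sq_zero, zero_mul]

/-- `BX U W r s = Λ^r U ⊗ Λ^s W` for `r, s ≥ 0`, and the zero space otherwise. -/
noncomputable def BX (U W : Type) [AddCommGroup U] [Module ℂ U] [AddCommGroup W] [Module ℂ W] :
    ℤ → ℤ → Type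
  | Int.ofNat a, Int.ofNat b => ⋀[ℂ]^a U ⊗[ℂ] ⋀[ℂ]^b W
  | Int.ofNat _, Int.negSucc _ => PUnit
  | Int.negSucc _, _ => PUnit

noncomputable instance : ∀ r s, AddCommGroup (BX U W r s)
  | Int.ofNat a, Int.ofNat b => inferInstanceAs (AddCommGroup (⋀[ℂ]^a U ⊗[ℂ] ⋀[ℂ]^b W))
  | Int.ofNat _, Int.negSucc _ => inferInstanceAs (AddCommGroup PUnit)
  | Int.negSucc _, Int.ofNat _ => inferInstanceAs (AddCommGroup PUnit)
  | Int.negSucc _, Int.negSucc _ => inferInstanceAs (AddCommGroup PUnit)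

noncomputable instance : ∀ r s, Module ℂ (BX U W r s)
  | Int.ofNat a, Int.ofNat b => inferInstanceAs (Module ℂ (⋀[ℂ]^a U ⊗[ℂ] ⋀[ℂ]^b W))
  | Int.ofNat _, Int.negSucc _ => inferInstanceAs (Module ℂ PUnit)
  | Int.negSucc _, Int.ofNat _ => inferInstanceAs (Module ℂ PUnit)
  | Int.negSucc _, Int.negSucc _ => inferInstanceAs (Module ℂ PUnit)

/-- The operator `L_α = (α ∧ -) ⊗ id` on `BX U W`. -/
noncomputable def Bd1 (α : U) : ∀ r s, BX U W r s →ₗ[ℂ] BX U W (r + 1) s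
  | Int.ofNat a, Int.ofNat b => TensorProduct.map (Lmul α a) (LinearMap.id (M := ⋀[ℂ]^b W))
  | Int.ofNat _, Int.negSucc _ => 0
  | Int.negSucc _, _ => 0

/-- The operator `L_β = id ⊗ (β ∧ -)` on `BX U W`. -/
noncomputable def Bd2u (β : W) : ∀ r s, BX U W r s →ₗ[ℂ] BX U W r (s + 1)
  | Int.ofNat a, Int.ofNat b => TensorProduct.map (LinearMap.id (M := ⋀[ℂ]^a U)) (Lmul β b)
  | Int.ofNat _, Int.negSucc _ => 0
  | Int.negSucc _, _ => 0

/-- The signed operator `(-1)^r L_β = (-1)^r (id ⊗ (β ∧ -))` on `BX U W`. -/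
noncomputable def Bd2s (β : W) : ∀ r s, BX U W r s →ₗ[ℂ] BX U W r (s + 1)
  | Int.ofNat a, Int.ofNat b =>
      ((-1 : ℂ) ^ a) • TensorProduct.map (LinearMap.id (M := ⋀[ℂ]^a U)) (Lmul β b)
  | Int.ofNat _, Int.negSucc _ => 0
  | Int.negSucc _, _ => 0

/-- Transport of `BX` along equalities of the indices. -/
noncomputable def BXcast {r s r' s' : ℤ} (h1 : r = r') (h2 : s = s') :
    BX U W r s ≃ₗ[ℂ] BX U W r' s' := by
  subst h1; subst h2; exact LinearEquiv.refl ℂ _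


set_option maxHeartbeats 1000000
set_option synthInstance.maxHeartbeats 400000

lemma SEAC.contract_mem (d : Module.Dual ℂ U) {n : ℕ} {x : ExteriorAlgebra ℂ U}
    (hx : x ∈ ⋀[ℂ]^n U) :
    CliffordAlgebra.contractLeft d x ∈ ⋀[ℂ]^(n - 1) U := by
  induction hx using Submodule.pow_induction_on_left' with
  | algebraMap r =>
      rw [CliffordAlgebra.contractLeft_algebraMap]
      exact Submodule.zero_mem _
  | add x y i hx hy ihx ihy =>
      rw [map_add]; exact Submodule.add_mem _ ihx ihy
  | mem_mul m hm i x hx ih =>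
      obtain ⟨u, rfl⟩ := hm
      rw [CliffordAlgebra.contractLeft_ι_mul]
      refine Submodule.sub_mem _ (Submodule.smul_mem _ _ hx) ?_
      cases i with
      | zero =>
          rw [pow_zero] at hx
          obtain ⟨r, rfl⟩ := Submodule.mem_one.mp hx
          rw [CliffordAlgebra.contractLeft_algebraMap, mul_zero]
          exact Submodule.zero_mem _
      | succ j =>
          have h1 : ExteriorAlgebra.ι ℂ u ∈ ⋀[ℂ]^1 U := by
            show ExteriorAlgebra.ι ℂ u ∈ LinearMap.range (ExteriorAlgebra.ι ℂ (M := U)) ^ 1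
            rw [pow_one]; exact LinearMap.mem_range_self _ u
          have := SetLike.mul_mem_graded h1 ih
          simpa [Nat.add_comm 1 j] using this

/-- Contraction (interior product) on exterior powers. -/
noncomputable def SEAC.Cmul (d : Module.Dual ℂ U) (n : ℕ) : ⋀[ℂ]^(n + 1) U →ₗ[ℂ] ⋀[ℂ]^n U :=
  (CliffordAlgebra.contractLeft d).restrict fun x hx => SEAC.contract_mem d hx

lemma SEAC.homotopy (d : Module.Dual ℂ U) (α : U) (hd : d α = 1) (n : ℕ)
    (x : ⋀[ℂ]^(n + 1) U) :
    Lmul α n (SEAC.Cmul d n x) + SEAC.Cmul d (n + 1) (Lmul α (n + 1) x) = x := by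
  apply Subtype.ext
  show ExteriorAlgebra.ι ℂ α * (CliffordAlgebra.contractLeft d (x : ExteriorAlgebra ℂ U))
      + CliffordAlgebra.contractLeft d (ExteriorAlgebra.ι ℂ α * (x : ExteriorAlgebra ℂ U))
      = (x : ExteriorAlgebra ℂ U)
  rw [CliffordAlgebra.contractLeft_ι_mul, hd, one_smul]
  rw [add_comm, sub_add_cancel]

lemma SEAC.exists_dual_one {V : Type} [AddCommGroup V] [Module ℂ V] {v : V} (hv : v ≠ 0) :
    ∃ d : Module.Dual ℂ V, d v = 1 := by
  have h : ¬ ∀ φ : Module.Dual ℂ V, φ v = 0 := by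
    rw [Module.forall_dual_apply_eq_zero_iff]; exact hv
  push_neg at h
  obtain ⟨φ, hφ⟩ := h
  exact ⟨(φ v)⁻¹ • φ, by simp [inv_mul_cancel₀ hφ]⟩

lemma SEAC.map_comm {A A' B B' : Type} [AddCommGroup A] [Module ℂ A] [AddCommGroup A']
    [Module ℂ A'] [AddCommGroup B] [Module ℂ B] [AddCommGroup B'] [Module ℂ B']
    (f : A →ₗ[ℂ] A') (g : B →ₗ[ℂ] B') (z : A ⊗[ℂ] B) :
    TensorProduct.map f LinearMap.id (TensorProduct.map LinearMap.id g z)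
      = TensorProduct.map LinearMap.id g (TensorProduct.map f LinearMap.id z) := by
  induction z using TensorProduct.induction_on with
  | zero => simp
  | tmul u w => simp
  | add x y hx hy => simp only [map_add, hx, hy]

lemma SEAC.homotopyT_right (e : Module.Dual ℂ W) (β : W) (he : e β = 1) (r s : ℕ)
    (z : ⋀[ℂ]^r U ⊗[ℂ] ⋀[ℂ]^(s + 1) W) :
    TensorProduct.map LinearMap.id (Lmul β s)
        (TensorProduct.map LinearMap.id (SEAC.Cmul e s) z)
      + TensorProduct.map LinearMap.id (SEAC.Cmul e (s + 1))
        (TensorProduct.map LinearMap.id (Lmul β (s + 1)) z) = z := by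
  induction z using TensorProduct.induction_on with
  | zero => simp
  | tmul u w =>
      simp only [TensorProduct.map_tmul, LinearMap.id_coe, id_eq,
        ← TensorProduct.tmul_add, SEAC.homotopy e β he s w]
  | add x y hx hy =>
      simp only [map_add]
      rw [add_add_add_comm, hx, hy]

lemma SEAC.homotopyT_left (d : Module.Dual ℂ U) (α : U) (hd : d α = 1) (r s : ℕ)
    (z : ⋀[ℂ]^(r + 1) U ⊗[ℂ] ⋀[ℂ]^s W) :
    TensorProduct.map (Lmul α r) LinearMap.id
        (TensorProduct.map (SEAC.Cmul d r) LinearMap.id z)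
      + TensorProduct.map (SEAC.Cmul d (r + 1)) LinearMap.id
        (TensorProduct.map (Lmul α (r + 1)) LinearMap.id z) = z := by
  induction z using TensorProduct.induction_on with
  | zero => simp
  | tmul u w =>
      simp only [TensorProduct.map_tmul, LinearMap.id_coe, id_eq,
        ← TensorProduct.add_tmul, SEAC.homotopy d α hd r u]
  | add x y hx hy =>
      simp only [map_add]
      rw [add_add_add_comm, hx, hy]

lemma SEAC.LL_zero_left (α : U) (r s : ℕ) (z : ⋀[ℂ]^r U ⊗[ℂ] ⋀[ℂ]^s W) :
    TensorProduct.map (Lmul α (r + 1)) LinearMap.id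
      (TensorProduct.map (Lmul α r) (LinearMap.id (M := ⋀[ℂ]^s W)) z) = 0 := by
  induction z using TensorProduct.induction_on with
  | zero => simp
  | tmul u w => simp [TensorProduct.map_tmul, Lmul_Lmul]
  | add x y hx hy => simp only [map_add, hx, hy, add_zero]

lemma SEAC.key (α : U) (β : W) (hα : α ≠ 0) (hβ : β ≠ 0) (m n : ℕ)
    (ω₁ : ⋀[ℂ]^m U ⊗[ℂ] ⋀[ℂ]^(n + 1) W) (ω₂ : ⋀[ℂ]^(m + 1) U ⊗[ℂ] ⋀[ℂ]^n W)
    (h1 : TensorProduct.map (LinearMap.id (M := ⋀[ℂ]^m U)) (Lmul β (n + 1)) ω₁ = 0)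
    (h2 : TensorProduct.map (Lmul α (m + 1)) (LinearMap.id (M := ⋀[ℂ]^n W)) ω₂ = 0)
    (h3 : TensorProduct.map (Lmul α m) (LinearMap.id (M := ⋀[ℂ]^(n + 1) W)) ω₁
        = TensorProduct.map (LinearMap.id (M := ⋀[ℂ]^(m + 1) U)) (Lmul β n) ω₂) :
    ∃ η : ⋀[ℂ]^m U ⊗[ℂ] ⋀[ℂ]^n W,
      ω₁ = TensorProduct.map LinearMap.id (Lmul β n) η
      ∧ ω₂ = TensorProduct.map (Lmul α m) LinearMap.id η := by
  obtain ⟨d, hd⟩ := SEAC.exists_dual_one hα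
  obtain ⟨e, he⟩ := SEAC.exists_dual_one hβ
  set t : ⋀[ℂ]^m U ⊗[ℂ] ⋀[ℂ]^n W :=
    TensorProduct.map LinearMap.id (SEAC.Cmul e n) ω₁ with ht
  set y : ⋀[ℂ]^(m + 1) U ⊗[ℂ] ⋀[ℂ]^n W :=
    TensorProduct.map (Lmul α m) LinearMap.id t with hy
  -- e1 : L_β (h_β ω₁) = ω₁
  have e1 : TensorProduct.map LinearMap.id (Lmul β n) t = ω₁ := by
    have := SEAC.homotopyT_right (U := U) e β he m n ω₁
    rw [h1, map_zero, add_zero] at this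
    exact this
  refine ⟨t + TensorProduct.map (SEAC.Cmul d m) LinearMap.id ω₂
      - TensorProduct.map (SEAC.Cmul d m) LinearMap.id y, ?_, ?_⟩
  · -- ω₁ = L_β η
    rw [map_sub, map_add, e1]
    have c1 : TensorProduct.map LinearMap.id (Lmul β n)
        (TensorProduct.map (SEAC.Cmul d m) LinearMap.id ω₂)
        = TensorProduct.map (SEAC.Cmul d m) LinearMap.id
          (TensorProduct.map LinearMap.id (Lmul β n) ω₂) :=
      (SEAC.map_comm (SEAC.Cmul d m) (Lmul β n) ω₂).symm
    have c2 : TensorProduct.map LinearMap.id (Lmul β n)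
        (TensorProduct.map (SEAC.Cmul d m) LinearMap.id y)
        = TensorProduct.map (SEAC.Cmul d m) LinearMap.id
          (TensorProduct.map LinearMap.id (Lmul β n) y) :=
      (SEAC.map_comm (SEAC.Cmul d m) (Lmul β n) y).symm
    have c3 : TensorProduct.map LinearMap.id (Lmul β n) y
        = TensorProduct.map (Lmul α m) LinearMap.id ω₁ := by
      rw [hy, ← SEAC.map_comm (Lmul α m) (Lmul β n) t, e1]
    rw [c1, c2, c3, h3]
    abel
  · -- ω₂ = L_α η
    rw [map_sub, map_add]
    have e2 : TensorProduct.map (Lmul α m) LinearMap.id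
        (TensorProduct.map (SEAC.Cmul d m) LinearMap.id ω₂) = ω₂ := by
      have := SEAC.homotopyT_left (W := W) d α hd m n ω₂
      rw [h2, map_zero, add_zero] at this
      exact this
    have e3 : TensorProduct.map (Lmul α m) LinearMap.id
        (TensorProduct.map (SEAC.Cmul d m) LinearMap.id y) = y := by
      have := SEAC.homotopyT_left (W := W) d α hd m n y
      rw [hy, SEAC.LL_zero_left, map_zero, add_zero] at this
      exact this
    rw [e2, e3, ← hy]
    abel

/-- Exactness of the symbol complex of the Schweitzer complex in the degree just above
the corner: if `ω₁ ∈ Λ^a U ⊗ Λ^{b+1} W` and `ω₂ ∈ Λ^{a+1} U ⊗ Λ^b W` satisfy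
`L_β ω₁ = 0`, `L_α ω₂ = 0` and `L_α ω₁ = L_β ω₂` (for `α, β` nonzero), then there is
`η ∈ Λ^a U ⊗ Λ^b W` with `ω₁ = L_β η` and `ω₂ = L_α η`. -/
theorem symbol_exact_above_corner (U W : Type) [AddCommGroup U] [Module ℂ U]
    [AddCommGroup W] [Module ℂ W] [FiniteDimensional ℂ U] [FiniteDimensional ℂ W]
    (α : U) (β : W) (hα : α ≠ 0) (hβ : β ≠ 0) (a b : ℤ) (ha : 0 ≤ a) (hb : 0 ≤ b)
    (ω₁ : BX U W a (b + 1)) (ω₂ : BX U W (a + 1) b)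
    (h1 : Bd2u β a (b + 1) ω₁ = 0) (h2 : Bd1 α (a + 1) b ω₂ = 0)
    (h3 : Bd1 α a (b + 1) ω₁ = Bd2u β (a + 1) b ω₂) :
    ∃ η : BX U W a b, ω₁ = Bd2u β a b η ∧ ω₂ = Bd1 α a b η := by
  obtain ⟨m, rfl⟩ := Int.eq_ofNat_of_zero_le ha
  obtain ⟨n, rfl⟩ := Int.eq_ofNat_of_zero_le hb
  exact SEAC.key α β hα hβ m n ω₁ ω₂ h1 h2 h3
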